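/- Let \(g\) be a real-valued orientation-preserving \(C^1\)-diffeomorphism on a neighborhood of \(0\) with \(g(0)=0\) and \(g'(0)=a\), \(0<a<1\). If \(h\) and \(h_1\) are both orientation-preserving \(C^1\)-diffeomorphisms defined on neighborhoods of \(0\) with \(h(0)=h_1(0)=0\), \(h'(0)=h_1'(0)=1\), and both satisfy the linearization equation \(h \circ g = a\,h\) and \(h_1 \circ g = a\,h_1\) near \(0\), then \(h = h_1\) on some neighborhood of \(0\). -/

import Mathlib

open Set Filter Topology

/-- Uniqueness part of the Sternberg linearization theorem: if `g` is an
orientation-preserving `C¹`-diffeomorphism of a neighborhood of `0` with `g 0 = 0`,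
`g' 0 = a`, `0 < a < 1`, and `h`, `h₁` are two orientation-preserving
`C¹`-diffeomorphisms of neighborhoods of `0` with `h 0 = h₁ 0 = 0`,
`h' 0 = h₁' 0 = 1`, both conjugating `g` to multiplication by `a`
(`h ∘ g = a·h`, `h₁ ∘ g = a·h₁` near `0`), then `h = h₁` on some neighborhood of `0`. -/
theorem stmt_3 (a : ℝ) (ha : a ∈ Ioo (0 : ℝ) 1)
    (W : Set ℝ) (hW : W ∈ nhds (0 : ℝ))
    (g g' : ℝ → ℝ)
    (hgderiv : ∀ x ∈ W, HasDerivAt g (g' x) x)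
    (hgcont : ContinuousOn g' W)
    (hgmono : StrictMonoOn g W)
    (hg0 : g 0 = 0) (hg'0 : g' 0 = a)
    (V : Set ℝ) (hV : V ∈ nhds (0 : ℝ))
    (h h' : ℝ → ℝ)
    (hhderiv : ∀ x ∈ V, HasDerivAt h (h' x) x)
    (hhcont : ContinuousOn h' V)
    (hhmono : StrictMonoOn h V)
    (hh0 : h 0 = 0) (hh'0 : h' 0 = 1)
    (hhlin : ∀ x ∈ V, h (g x) = a * h x)
    (V₁ : Set ℝ) (hV₁ : V₁ ∈ nhds (0 : ℝ))
    (h₁ h₁' : ℝ → ℝ)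
    (hh₁deriv : ∀ x ∈ V₁, HasDerivAt h₁ (h₁' x) x)
    (hh₁cont : ContinuousOn h₁' V₁)
    (hh₁mono : StrictMonoOn h₁ V₁)
    (hh₁0 : h₁ 0 = 0) (hh₁'0 : h₁' 0 = 1)
    (hh₁lin : ∀ x ∈ V₁, h₁ (g x) = a * h₁ x) :
    ∃ N ∈ nhds (0 : ℝ), Set.EqOn h h₁ N := by
  obtain ⟨ha0, ha1⟩ := ha
  set c : ℝ := (a + 1) / 2 with hcdef
  have hac : a < c := by simp only [hcdef]; linarith
  have hc1 : c < 1 := by simp only [hcdef]; linarith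
  have hc0 : 0 < c := by simp only [hcdef]; linarith
  -- g' is continuous at 0, so |g'| ≤ c near 0
  have hg'cont : ContinuousAt g' 0 := hgcont.continuousAt hW
  have hsmall : ∀ᶠ x in nhds (0 : ℝ), |g' x| < c := by
    have : Tendsto g' (nhds 0) (nhds a) := by
      simpa [hg'0] using hg'cont.tendsto
    have habs : |a| < c := by rw [abs_of_pos ha0]; exact hac
    exact this.eventually (Filter.Tendsto.eventually_lt_const habs
      (continuous_abs.tendsto a) |>.mono (fun x hx => hx))
  have hmem : W ∩ V ∩ V₁ ∩ {x | |g' x| < c} ∈ nhds (0 : ℝ) :=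
    inter_mem (inter_mem (inter_mem hW hV) hV₁) hsmall
  obtain ⟨δ, hδ0, hδsub⟩ : ∃ δ > 0, Icc (-δ) δ ⊆ W ∩ V ∩ V₁ ∩ {x | |g' x| < c} := by
    obtain ⟨δ, hδ0, hsub⟩ := Metric.nhds_basis_closedBall.mem_iff.1 hmem
    refine ⟨δ, hδ0, ?_⟩
    rwa [Real.closedBall_eq_Icc, zero_sub, zero_add] at hsub
  set N : Set ℝ := Icc (-δ) δ with hNdef
  have hN0 : (0 : ℝ) ∈ N := ⟨by linarith, by linarith⟩
  have hNW : N ⊆ W := fun x hx => ((hδsub hx).1.1).1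
  have hNV : N ⊆ V := fun x hx => ((hδsub hx).1.1).2
  have hNV₁ : N ⊆ V₁ := fun x hx => (hδsub hx).1.2
  have hNg' : ∀ x ∈ N, |g' x| ≤ c := fun x hx => le_of_lt (hδsub hx).2
  -- contraction: |g x| ≤ c * |x| for x ∈ N
  have hcontr : ∀ x ∈ N, |g x| ≤ c * |x| := by
    intro x hx
    have := Convex.norm_image_sub_le_of_norm_hasDerivWithin_le
      (f := g) (f' := g') (C := c) (s := N)
      (fun y hy => ((hgderiv y (hNW hy)).hasDerivWithinAt))
      (fun y hy => by simpa [Real.norm_eq_abs] using hNg' y hy)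
      (convex_Icc _ _) hN0 hx
    simpa [hg0, Real.norm_eq_abs] using this
  have hinv : ∀ x ∈ N, g x ∈ N := by
    intro x hx
    have h1 : |x| ≤ δ := abs_le.2 ⟨hx.1, hx.2⟩
    have h2 : |g x| ≤ δ := le_trans (hcontr x hx)
      (le_trans (mul_le_mul_of_nonneg_right (le_of_lt hc1) (abs_nonneg x)) (by simpa using h1))
    exact abs_le.1 h2
  have hne : ∀ x ∈ N, x ≠ 0 → g x ≠ 0 := by
    intro x hx hx0
    rcases lt_or_gt_of_ne hx0 with hlt | hgt
    · have := hgmono (hNW hx) (hNW hN0) hlt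
      rw [hg0] at this; exact ne_of_lt this
    · have := hgmono (hNW hN0) (hNW hx) hgt
      rw [hg0] at this; exact ne_of_gt this
  refine ⟨N, Icc_mem_nhds (by linarith) hδ0, ?_⟩
  intro x hx
  rcases eq_or_ne x 0 with rfl | hx0
  · rw [hh0, hh₁0]
  -- iterate properties
  have key : ∀ n : ℕ, g^[n] x ∈ N ∧ g^[n] x ≠ 0 ∧ |g^[n] x| ≤ c ^ n * |x|
      ∧ h (g^[n] x) = a ^ n * h x ∧ h₁ (g^[n] x) = a ^ n * h₁ x := by
    intro n
    induction n with
    | zero => simp [hx, hx0]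
    | succ n ih =>
      obtain ⟨hmem, hne0, hbd, hh, hh₁⟩ := ih
      rw [Function.iterate_succ_apply']
      refine ⟨hinv _ hmem, hne _ hmem hne0, ?_, ?_, ?_⟩
      · calc |g (g^[n] x)| ≤ c * |g^[n] x| := hcontr _ hmem
          _ ≤ c * (c ^ n * |x|) := by
              exact mul_le_mul_of_nonneg_left hbd (le_of_lt hc0)
          _ = c ^ (n + 1) * |x| := by ring
      · rw [hhlin _ (hNV hmem), hh]; ring
      · rw [hh₁lin _ (hNV₁ hmem), hh₁]; ring
  -- gⁿ x → 0 within ≠ 0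
  have htend : Tendsto (fun n => g^[n] x) atTop (nhdsWithin (0:ℝ) {0}ᶜ) := by
    have h1 : Tendsto (fun n => g^[n] x) atTop (nhds 0) := by
      have hsq : Tendsto (fun n : ℕ => c ^ n * |x|) atTop (nhds 0) := by
        simpa using (tendsto_pow_atTop_nhds_zero_of_lt_one (le_of_lt hc0) hc1).mul_const |x|
      exact squeeze_zero_norm (f := fun n : ℕ => g^[n] x) (fun n => by
        rw [Real.norm_eq_abs]; exact (key n).2.2.1) hsq
    exact tendsto_nhdsWithin_of_tendsto_nhds_of_eventually_within _ h1
      (Filter.Eventually.of_forall fun n => (key n).2.1)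
  -- slopes tend to 1
  have hs : Tendsto (slope h 0) (nhdsWithin (0:ℝ) {0}ᶜ) (nhds 1) := by
    have := hasDerivAt_iff_tendsto_slope.1 (hhderiv 0 (hNV hN0))
    rwa [hh'0] at this
  have hs₁ : Tendsto (slope h₁ 0) (nhdsWithin (0:ℝ) {0}ᶜ) (nhds 1) := by
    have := hasDerivAt_iff_tendsto_slope.1 (hh₁deriv 0 (hNV₁ hN0))
    rwa [hh₁'0] at this
  have hratio : Tendsto (fun n => slope h 0 (g^[n] x) / slope h₁ 0 (g^[n] x))
      atTop (nhds 1) := by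
    have := ((hs.comp htend).div (hs₁.comp htend) one_ne_zero)
    rw [div_one] at this
    exact this
  have hh₁x : h₁ x ≠ 0 := by
    rcases lt_or_gt_of_ne hx0 with hlt | hgt
    · have := hh₁mono (hNV₁ hx) (hNV₁ hN0) hlt
      rw [hh₁0] at this; exact ne_of_lt this
    · have := hh₁mono (hNV₁ hN0) (hNV₁ hx) hgt
      rw [hh₁0] at this; exact ne_of_gt this
  have hconst : ∀ n : ℕ, slope h 0 (g^[n] x) / slope h₁ 0 (g^[n] x) = h x / h₁ x := by
    intro n
    obtain ⟨hmem, hne0, hbd, hhn, hh₁n⟩ := key n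
    have han : (a : ℝ) ^ n ≠ 0 := pow_ne_zero n (ne_of_gt ha0)
    rw [slope_def_field, slope_def_field, hh0, hh₁0, hhn, hh₁n]
    field_simp
    ring
  have : Tendsto (fun _ : ℕ => h x / h₁ x) atTop (nhds 1) := by
    simpa [hconst] using hratio
  have heq : h x / h₁ x = 1 := tendsto_nhds_unique tendsto_const_nhds this
  field_simp at heq
  exact heq
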